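/- Let I be an ideal of Γ = F[x,y]/(x² + y⁴ − 1) invariant under the derivation D (D(x) = 2y³, D(y) = −x). If I contains a nonzero polynomial f(y) in the image of F[y], then I = Γ. -/

import Mathlib

set_option synthInstance.maxHeartbeats 400000
set_option maxHeartbeats 1000000

open MvPolynomial

/-- The derivation `D = 2y³ ∂/∂x − x ∂/∂y` of `F[x,y]`. -/
noncomputable def Dxy (F : Type*) [Field F] :
    Derivation F (MvPolynomial (Fin 2) F) (MvPolynomial (Fin 2) F) :=
  mkDerivation F ![2 * X 1 ^ 3, - X 0]

/-- The quotient ring `Γ = F[x,y]/(x² + y⁴ − 1)`. -/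
abbrev Gam (F : Type*) [Field F] : Type _ :=
  MvPolynomial (Fin 2) F ⧸
    Ideal.span {(X 0 ^ 2 + X 1 ^ 4 - 1 : MvPolynomial (Fin 2) F)}

open Polynomial in
theorem keylem {F : Type*} [Field F] [CharZero F] (g : F[X]) (hg : g ≠ 0)
    (h1 : g ∣ (Polynomial.X^4 - 1) * derivative g)
    (h2 : g ∣ ((Polynomial.X^4 - 1) * derivative (derivative g) + 2 * Polynomial.X^3 * derivative g)) :
    g.natDegree = 0 := by
  classical
  by_contra hn
  have hg' : derivative g ≠ 0 := fun h => hn (natDegree_eq_zero_of_derivative_eq_zero h)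
  set c := gcd g (derivative g) with hc_def
  have hc : c ≠ 0 := gcd_ne_zero_of_left hg
  set a := g / c with ha_def
  set b := derivative g / c with hb_def
  have hga : c * a = g := EuclideanDomain.mul_div_cancel' hc (gcd_dvd_left _ _)
  have hgb : c * b = derivative g := EuclideanDomain.mul_div_cancel' hc (gcd_dvd_right _ _)
  have hab : IsCoprime a b := isCoprime_div_gcd_div_gcd hg'
  have ha0 : a ≠ 0 := left_div_gcd_ne_zero hg
  have hb0 : b ≠ 0 := right_div_gcd_ne_zero hg'
  have h4 : derivative (Polynomial.X^4 - 1 : F[X]) = 4 * Polynomial.X^3 := by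
    simp [derivative_X_pow, map_ofNat]
    norm_num
  -- a ∣ Polynomial.X^4 - 1
  have hA : a ∣ (Polynomial.X^4 - 1 : F[X]) := by
    have hd : c * a ∣ c * ((Polynomial.X^4-1) * b) := by
      rw [show c * ((Polynomial.X^4-1) * b) = (Polynomial.X^4-1) * (c*b) by ring, hga, hgb]; exact h1
    exact hab.dvd_of_dvd_mul_right ((mul_dvd_mul_iff_left hc).mp hd)
  obtain ⟨e, he⟩ := hA
  have hq : (Polynomial.X^4-1) * derivative g = (e*b) * g := by rw [he, ← hgb, ← hga]; ring
  have hder : 4*Polynomial.X^3 * derivative g + (Polynomial.X^4-1) * derivative (derivative g)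
      = derivative (e*b) * g + (e*b) * derivative g := by
    have hh := congrArg derivative hq
    rw [derivative_mul, derivative_mul, h4] at hh
    linear_combination hh
  -- a ∣ e*b - 2Polynomial.X^3
  have hA2 : a ∣ (e*b - 2*Polynomial.X^3 : F[X]) := by
    have hG : g ∣ (e*b - 2*Polynomial.X^3) * derivative g := by
      have heq : (e*b - 2*Polynomial.X^3) * derivative g
          = ((Polynomial.X^4-1) * derivative (derivative g) + 2*Polynomial.X^3 * derivative g)
            - (derivative (e*b)) * g := by linear_combination -hder
      rw [heq]
      exact dvd_sub h2 (dvd_mul_left g _)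
    have hd : c * a ∣ c * ((e*b - 2*Polynomial.X^3) * b) := by
      rw [show c * ((e*b - 2*Polynomial.X^3) * b) = (e*b - 2*Polynomial.X^3) * (c*b) by ring, hga, hgb]; exact hG
    exact hab.dvd_of_dvd_mul_right ((mul_dvd_mul_iff_left hc).mp hd)
  -- coprimality of a and e, via squarefreeness of Polynomial.X^4-1
  have hsq : Squarefree (Polynomial.X^4 - 1 : F[X]) := by
    have hsep : (Polynomial.X^4 - Polynomial.C (1:F)).Separable :=
      separable_X_pow_sub_C 1 (by norm_num) one_ne_zero
    have : (Polynomial.X^4 - Polynomial.C (1:F)) = Polynomial.X^4 - 1 := by rw [map_one]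
    rw [this] at hsep
    exact hsep.squarefree
  have hae : IsCoprime a e :=
    EuclideanDomain.isCoprime_of_dvd (fun h => ha0 h.1)
      (fun z hz hz0 hza hze =>
        (mem_nonunits_iff.mp hz) (hsq z (by rw [he]; exact mul_dvd_mul hza hze)))
  -- a ∣ 2b - a'
  have h7 : a ∣ 2*b - derivative a := by
    have h6 : derivative a * e + a * derivative e = 4 * Polynomial.X^3 := by
      have hh := congrArg derivative he
      rw [derivative_mul, h4] at hh
      linear_combination -hh
    have h5 : a ∣ e * (2*b - derivative a) := by
      have heq : e * (2*b - derivative a)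
          = 2*(e*b - 2*Polynomial.X^3) + a * derivative e := by linear_combination -h6
      rw [heq]
      exact dvd_add (hA2.mul_left 2) (dvd_mul_right a _)
    exact hae.dvd_of_dvd_mul_left h5
  -- degree bookkeeping
  have hdg : g.natDegree = c.natDegree + a.natDegree := by
    rw [← hga, natDegree_mul hc ha0]
  have hdg' : (derivative g).natDegree = c.natDegree + b.natDegree := by
    rw [← hgb, natDegree_mul hc hb0]
  have hpos : 0 < g.natDegree := Nat.pos_of_ne_zero hn
  have hdd : (derivative g).natDegree = g.natDegree - 1 :=
    natDegree_eq_of_degree_eq_some (degree_derivative_eq g hpos)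
  have hba : a.natDegree = b.natDegree + 1 := by omega
  -- 2b - a' = 0
  have hz : 2*b - derivative a = 0 := by
    by_contra h0
    have hlt : (2*b - derivative a).natDegree < a.natDegree := by
      have l1 : (2*b : F[X]).natDegree ≤ b.natDegree := by
        simpa using natDegree_mul_le (p := (2:F[X])) (q := b)
      have l2 : (derivative a).natDegree ≤ a.natDegree - 1 := natDegree_derivative_le a
      have := natDegree_sub_le (2*b) (derivative a)
      omega
    exact h0 (Polynomial.eq_zero_of_dvd_of_natDegree_lt h7 hlt)
  have hda : derivative a = 2*b := (sub_eq_zero.mp hz).symm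
  have hcb : derivative c * a = -(c*b) := by
    have h8 : derivative c * a + c * derivative a = c * b := by
      have hh := congrArg derivative hga
      rw [derivative_mul, ← hgb] at hh
      linear_combination hh
    linear_combination h8 - c * hda
  have hzero : derivative (c*(c*a)) = 0 := by
    rw [derivative_mul, derivative_mul]
    linear_combination (2*c)*hcb + (c*c)*hda
  have hdeg0 : (c*(c*a)).natDegree = 0 := natDegree_eq_zero_of_derivative_eq_zero hzero
  rw [natDegree_mul hc (mul_ne_zero hc ha0), natDegree_mul hc ha0] at hdeg0
  omega

/-- If a `D`-invariant ideal `I` of `Γ = F[x,y]/(x² + y⁴ − 1)` contains a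
nonzero polynomial `f(y)` from the image of `F[y]`, then `I = Γ`. -/
theorem stmt5 (F : Type*) [Field F] [CharZero F]
    (D' : Derivation F (Gam F) (Gam F))
    (hD' : ∀ p : MvPolynomial (Fin 2) F,
      D' (Ideal.Quotient.mk _ p) = Ideal.Quotient.mk _ (Dxy F p))
    (I : Ideal (Gam F)) (hinv : ∀ a ∈ I, D' a ∈ I)
    (f : Polynomial F) (hf : f ≠ 0)
    (hfI : Polynomial.aeval (Ideal.Quotient.mk _ (X 1) : Gam F) f ∈ I) :
    I = ⊤ := by
  set S : Ideal (MvPolynomial (Fin 2) F) :=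
    Ideal.span {(X 0 ^ 2 + X 1 ^ 4 - 1 : MvPolynomial (Fin 2) F)} with hS
  set t : Gam F := Ideal.Quotient.mk S (X 1) with ht
  set xb : Gam F := Ideal.Quotient.mk S (X 0) with hxb
  have hxt : xb ^ 2 = 1 - t ^ 4 := by
    have h0 : Ideal.Quotient.mk S (X 0 ^ 2 + X 1 ^ 4 - 1) = 0 :=
      Ideal.Quotient.eq_zero_iff_mem.mpr (Ideal.subset_span (Set.mem_singleton _))
    rw [map_sub, map_add, map_pow, map_pow, map_one] at h0
    linear_combination h0
  have hDt : D' t = -xb := by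
    rw [ht, hD']
    have : Dxy F (X 1) = -(X 0) := by
      rw [Dxy, mkDerivation_X]
      simp
    rw [this, map_neg]
  have hDx : D' xb = 2 * t ^ 3 := by
    rw [hxb, hD']
    have : Dxy F (X 0) = 2 * X 1 ^ 3 := by
      rw [Dxy, mkDerivation_X]
      simp
    rw [this, map_mul, map_pow, map_ofNat]
  -- closure of I under the two operators, for elements `aeval t p`
  have haux1 : ∀ p : Polynomial F, Polynomial.aeval t p ∈ I →
      Polynomial.aeval t ((Polynomial.X^4 - 1) * Polynomial.derivative p) ∈ I := by
    intro p hp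
    have h1 := hinv _ hp
    rw [Derivation.map_aeval, hDt, smul_eq_mul] at h1
    have h2 := I.mul_mem_left xb h1
    have heq : xb * (Polynomial.aeval t (Polynomial.derivative p) * -xb)
        = Polynomial.aeval t ((Polynomial.X^4 - 1) * Polynomial.derivative p) := by
      rw [map_mul]
      have h3 : (Polynomial.aeval t) (Polynomial.X^4 - 1 : Polynomial F) = t^4 - 1 := by
        simp
      rw [h3]
      linear_combination (-(Polynomial.aeval t (Polynomial.derivative p))) * hxt
    rwa [heq] at h2
  have haux2 : ∀ p : Polynomial F, Polynomial.aeval t p ∈ I →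
      Polynomial.aeval t ((Polynomial.X^4 - 1) * Polynomial.derivative (Polynomial.derivative p)
        + 2 * Polynomial.X^3 * Polynomial.derivative p) ∈ I := by
    intro p hp
    have h1 := hinv _ (hinv _ hp)
    rw [Derivation.map_aeval, hDt, smul_eq_mul, Derivation.leibniz, Derivation.map_aeval, hDt,
      map_neg, hDx] at h1
    simp only [smul_eq_mul] at h1
    have h2 := I.neg_mem h1
    have heq : -(Polynomial.aeval t (Polynomial.derivative p) * -(2 * t ^ 3) +
          -xb * (Polynomial.aeval t (Polynomial.derivative (Polynomial.derivative p)) * -xb))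
        = Polynomial.aeval t ((Polynomial.X^4 - 1) *
            Polynomial.derivative (Polynomial.derivative p)
            + 2 * Polynomial.X^3 * Polynomial.derivative p) := by
      have h3 : (Polynomial.aeval t) (Polynomial.X^4 - 1 : Polynomial F) = t^4 - 1 := by simp
      rw [map_add, map_mul, map_mul, map_mul, h3, map_ofNat, map_pow, Polynomial.aeval_X]
      linear_combination (-(Polynomial.aeval t (Polynomial.derivative (Polynomial.derivative p)))) * hxt
    rwa [heq] at h2
  -- pull back to an ideal of F[X]
  set J : Ideal (Polynomial F) :=
    Ideal.comap (Polynomial.aeval t : Polynomial F →ₐ[F] Gam F).toRingHom I with hJ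
  have hmemJ : ∀ p : Polynomial F, p ∈ J ↔ Polynomial.aeval t p ∈ I := fun p => Iff.rfl
  obtain ⟨g, hgJ⟩ := (IsPrincipalIdealRing.principal J).principal
  have hfJ : f ∈ J := (hmemJ f).mpr hfI
  have hg0 : g ≠ 0 := by
    rintro rfl
    rw [hgJ] at hfJ
    simp only [Submodule.span_zero_singleton, Ideal.mem_bot] at hfJ
    exact hf hfJ
  have hgmem : g ∈ J := by rw [hgJ]; exact Ideal.subset_span (Set.mem_singleton _)
  have hd1 : g ∣ (Polynomial.X^4 - 1) * Polynomial.derivative g := by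
    have := (hmemJ _).mpr (haux1 g ((hmemJ g).mp hgmem))
    rw [hgJ] at this
    exact Ideal.mem_span_singleton.mp this
  have hd2 : g ∣ ((Polynomial.X^4 - 1) * Polynomial.derivative (Polynomial.derivative g)
      + 2 * Polynomial.X^3 * Polynomial.derivative g) := by
    have := (hmemJ _).mpr (haux2 g ((hmemJ g).mp hgmem))
    rw [hgJ] at this
    exact Ideal.mem_span_singleton.mp this
  have hdeg : g.natDegree = 0 := keylem g hg0 hd1 hd2
  have hunit : IsUnit g := by
    rw [Polynomial.eq_C_of_natDegree_eq_zero hdeg] at hg0 ⊢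
    exact Polynomial.isUnit_C.mpr (isUnit_iff_ne_zero.mpr (fun h => hg0 (by rw [h, map_zero])))
  have hJtop : J = ⊤ := by
    rw [hgJ]
    exact Ideal.span_singleton_eq_top.mpr hunit
  have h1I : (1 : Gam F) ∈ I := by
    have : (1 : Polynomial F) ∈ J := hJtop ▸ Submodule.mem_top
    have h2 := (hmemJ 1).mp this
    rwa [map_one] at h2
  exact Ideal.eq_top_iff_one I |>.mpr h1I
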